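/- The following statements are equivalent: (i) P(I(Θ) ∈ ℤ) = 1; (ii) P(lim_{|j|→∞} ‖Θ_j‖ = 0) = 1; (iii) P(Σ_{j∈ℤ} ‖Θ_j‖^α < ∞) = 1. -/

import Mathlib

open MeasureTheory ProbabilityTheory Set Filter
open scoped ENNReal NNReal Topology

noncomputable section

/-- The iterated backshift operator: `(B^k x) j = x (j - k)`. -/
def backshift {V : Type*} (k : ℤ) (x : ℤ → V) : ℤ → V := fun j => x (j - k)

/-- `InfargmaxAt x j` is the event `I(x) = j` for the infargmax functional `I`:
the first time the supremum of the norms is achieved is `j`, i.e.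
`sup_{i<j} ‖x_i‖ < ‖x_j‖` and `sup_{i>j} ‖x_i‖ ≤ ‖x_j‖`.  (`I(x) ∈ ℤ` is then
expressed as `∃ j, InfargmaxAt x j`.) -/
def InfargmaxAt {V : Type*} [NormedAddCommGroup V] (x : ℤ → V) (j : ℤ) : Prop :=
  (⨆ i : {i : ℤ // i < j}, (‖x i.1‖₊ : ℝ≥0∞)) < (‖x j‖₊ : ℝ≥0∞) ∧
    (⨆ i : {i : ℤ // j < i}, (‖x i.1‖₊ : ℝ≥0∞)) ≤ (‖x j‖₊ : ℝ≥0∞)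

set_option linter.unusedSectionVars false

section Aux

variable {V : Type*} [NormedAddCommGroup V]

lemma backshift_comp (a b : ℤ) (x : ℤ → V) :
    backshift a (backshift b x) = backshift (a + b) x := by
  funext j
  simp only [backshift]
  congr 1
  omega

lemma backshift_zero : (backshift 0 : (ℤ → V) → ℤ → V) = id := by
  funext x j
  simp [backshift]

lemma measurable_backshift {W : Type*} [MeasurableSpace W] (k : ℤ) :
    Measurable (backshift k : (ℤ → W) → ℤ → W) :=
  measurable_pi_lambda _ fun j => measurable_pi_apply (j - k)

lemma infarg_pos {x : ℤ → V} {j : ℤ} (h : InfargmaxAt x j) : x j ≠ 0 := by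
  have h0 : (0 : ℝ≥0∞) < (‖x j‖₊ : ℝ≥0∞) := lt_of_le_of_lt (zero_le) h.1
  simpa [ENNReal.coe_pos, nnnorm_pos] using h0

lemma infarg_not_lt {x : ℤ → V} {j j' : ℤ} (h : InfargmaxAt x j) (h' : InfargmaxAt x j') :
    ¬ j < j' := by
  intro hlt
  have h1 : (‖x j'‖₊ : ℝ≥0∞) ≤ (‖x j‖₊ : ℝ≥0∞) :=
    le_trans (le_iSup (fun i : {i : ℤ // j < i} => (‖x i.1‖₊ : ℝ≥0∞)) ⟨j', hlt⟩) h.2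
  have h2 : (‖x j‖₊ : ℝ≥0∞) < (‖x j'‖₊ : ℝ≥0∞) :=
    lt_of_le_of_lt (le_iSup (fun i : {i : ℤ // i < j'} => (‖x i.1‖₊ : ℝ≥0∞)) ⟨j, hlt⟩) h'.1
  exact absurd (h1.trans_lt h2) (lt_irrefl _)

lemma infarg_unique {x : ℤ → V} {j j' : ℤ} (h : InfargmaxAt x j) (h' : InfargmaxAt x j') :
    j = j' := by
  rcases lt_trichotomy j j' with hlt | he | hgt
  · exact absurd hlt (infarg_not_lt h h')
  · exact he
  · exact absurd hgt (infarg_not_lt h' h)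

lemma infarg_smul [NormedSpace ℝ V] {c : ℝ} (hc : 0 < c) (x : ℤ → V) (j : ℤ) :
    InfargmaxAt (c • x) j ↔ InfargmaxAt x j := by
  have hnorm : ∀ i, (‖(c • x) i‖₊ : ℝ≥0∞) = (‖c‖₊ : ℝ≥0∞) * (‖x i‖₊ : ℝ≥0∞) := fun i => by
    rw [Pi.smul_apply, nnnorm_smul, ENNReal.coe_mul]
  have hc0 : ((‖c‖₊ : ℝ≥0∞)) ≠ 0 := by
    simp [hc.ne']
  have hctop : ((‖c‖₊ : ℝ≥0∞)) ≠ ⊤ := ENNReal.coe_ne_top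
  unfold InfargmaxAt
  simp only [hnorm, ← ENNReal.mul_iSup]
  rw [ENNReal.mul_lt_mul_iff_right hc0 hctop, ENNReal.mul_le_mul_iff_right hc0 hctop]

lemma iSup_shift_lt (f : ℤ → ℝ≥0∞) (k j : ℤ) :
    (⨆ i : {i : ℤ // i < j}, f (i.1 - k)) = ⨆ i : {i : ℤ // i < j - k}, f i.1 := by
  apply le_antisymm
  · exact iSup_le fun i => le_iSup_of_le ⟨i.1 - k, by omega⟩ le_rfl
  · exact iSup_le fun i => le_iSup_of_le ⟨i.1 + k, by omega⟩
      (le_of_eq (by show f i.1 = f (i.1 + k - k); congr 1; omega))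

lemma iSup_shift_gt (f : ℤ → ℝ≥0∞) (k j : ℤ) :
    (⨆ i : {i : ℤ // j < i}, f (i.1 - k)) = ⨆ i : {i : ℤ // j - k < i}, f i.1 := by
  apply le_antisymm
  · exact iSup_le fun i => le_iSup_of_le ⟨i.1 - k, by omega⟩ le_rfl
  · exact iSup_le fun i => le_iSup_of_le ⟨i.1 + k, by omega⟩
      (le_of_eq (by show f i.1 = f (i.1 + k - k); congr 1; omega))

lemma infarg_backshift (k : ℤ) (x : ℤ → V) (j : ℤ) :
    InfargmaxAt (backshift k x) j ↔ InfargmaxAt x (j - k) := by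
  have hL : (⨆ i : {i : ℤ // i < j}, (‖backshift k x i.1‖₊ : ℝ≥0∞))
      = ⨆ i : {i : ℤ // i < j - k}, (‖x i.1‖₊ : ℝ≥0∞) :=
    iSup_shift_lt (fun i => (‖x i‖₊ : ℝ≥0∞)) k j
  have hG : (⨆ i : {i : ℤ // j < i}, (‖backshift k x i.1‖₊ : ℝ≥0∞))
      = ⨆ i : {i : ℤ // j - k < i}, (‖x i.1‖₊ : ℝ≥0∞) :=
    iSup_shift_gt (fun i => (‖x i‖₊ : ℝ≥0∞)) k j
  unfold InfargmaxAt
  rw [hL, hG]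
  exact Iff.rfl

lemma measurableSet_infarg [MeasurableSpace V] [OpensMeasurableSpace V] (j : ℤ) :
    MeasurableSet {x : ℤ → V | InfargmaxAt x j} := by
  have hm : ∀ i : ℤ, Measurable fun x : ℤ → V => (‖x i‖₊ : ℝ≥0∞) := fun i =>
    measurable_coe_nnreal_ennreal.comp (measurable_pi_apply i).nnnorm
  have h1 : Measurable fun x : ℤ → V => ⨆ i : {i : ℤ // i < j}, (‖x i.1‖₊ : ℝ≥0∞) :=
    Measurable.iSup fun i => hm i.1
  have h2 : Measurable fun x : ℤ → V => ⨆ i : {i : ℤ // j < i}, (‖x i.1‖₊ : ℝ≥0∞) :=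
    Measurable.iSup fun i => hm i.1
  exact (measurableSet_lt h1 (hm j)).inter (measurableSet_le (α := ℝ≥0∞) h2 (hm j))

lemma exists_infarg_of_tendsto {x : ℤ → V} (h0 : x 0 ≠ 0)
    (h : Tendsto (fun j : ℤ => ‖x j‖) cofinite (𝓝 0)) : ∃ j, InfargmaxAt x j := by
  set c : ℝ≥0 := ‖x 0‖₊ with hc
  have hc0 : 0 < c := nnnorm_pos.2 h0
  have hfin : {i : ℤ | c / 2 ≤ ‖x i‖₊}.Finite := by
    have hev : ∀ᶠ j in cofinite, ‖x j‖ < (c : ℝ) / 2 :=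
      h.eventually_lt_const (by positivity)
    rw [eventually_cofinite] at hev
    refine hev.subset ?_
    intro i hi
    simp only [mem_setOf_eq, not_lt]
    have : ((c / 2 : ℝ≥0) : ℝ) ≤ ((‖x i‖₊ : ℝ≥0) : ℝ) := by exact_mod_cast hi
    simpa [coe_nnnorm] using this
  set F := hfin.toFinset with hF
  have h0F : (0 : ℤ) ∈ F := by
    rw [hF, Set.Finite.mem_toFinset]
    exact half_le_self hc0.le
  have hne : F.Nonempty := ⟨0, h0F⟩
  set m := F.sup' hne (fun i => ‖x i‖₊) with hm
  have hcm : c ≤ m := Finset.le_sup' (fun i => ‖x i‖₊) h0F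
  have hm0 : 0 < m := lt_of_lt_of_le hc0 hcm
  have hglobal : ∀ i, ‖x i‖₊ ≤ m := by
    intro i
    by_cases hi : i ∈ F
    · exact Finset.le_sup' (fun i => ‖x i‖₊) hi
    · have hi' : ¬ (c / 2 ≤ ‖x i‖₊) := by
        rw [hF, Set.Finite.mem_toFinset] at hi
        exact hi
      exact le_trans (lt_of_not_ge hi').le (le_trans (half_le_self hc0.le) hcm)
  obtain ⟨i₀, hi₀F, hi₀⟩ := Finset.exists_mem_eq_sup' hne (fun i => ‖x i‖₊)
  set G := F.filter (fun i => ‖x i‖₊ = m) with hG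
  have hGne : G.Nonempty := ⟨i₀, Finset.mem_filter.2 ⟨hi₀F, hi₀.symm⟩⟩
  set j₀ := G.min' hGne with hj₀def
  have hj₀G : j₀ ∈ G := G.min'_mem hGne
  have hj₀m : ‖x j₀‖₊ = m := (Finset.mem_filter.1 hj₀G).2
  have hltm : ∀ i, i < j₀ → ‖x i‖₊ < m := by
    intro i hij
    rcases lt_or_eq_of_le (hglobal i) with hlt | heq
    · exact hlt
    · exfalso
      have hiF : i ∈ F := by
        rw [hF, Set.Finite.mem_toFinset]
        show c / 2 ≤ ‖x i‖₊
        rw [heq]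
        exact le_trans (half_le_self hc0.le) hcm
      have hiG : i ∈ G := Finset.mem_filter.2 ⟨hiF, heq⟩
      exact absurd (G.min'_le i hiG) (by omega)
  refine ⟨j₀, ?_, ?_⟩
  · set b : ℝ≥0 := max ((F.filter (fun i => i < j₀)).sup (fun i => ‖x i‖₊)) (c / 2) with hb
    have hbm : b < m := by
      apply max_lt
      · rw [Finset.sup_lt_iff (show ⊥ < m from hm0)]
        intro i hi
        exact hltm i (Finset.mem_filter.1 hi).2
      · exact lt_of_lt_of_le (NNReal.half_lt_self hc0.ne') hcm
    have hble : ∀ i : {i : ℤ // i < j₀}, (‖x i.1‖₊ : ℝ≥0∞) ≤ (b : ℝ≥0∞) := by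
      intro i
      rw [ENNReal.coe_le_coe]
      by_cases hiF : i.1 ∈ F
      · exact le_max_of_le_left (Finset.le_sup (f := fun i => ‖x i‖₊)
          (Finset.mem_filter.2 ⟨hiF, i.2⟩))
      · have hi' : ¬ (c / 2 ≤ ‖x i.1‖₊) := by
          rw [hF, Set.Finite.mem_toFinset] at hiF
          exact hiF
        exact le_max_of_le_right (lt_of_not_ge hi').le
    calc (⨆ i : {i : ℤ // i < j₀}, (‖x i.1‖₊ : ℝ≥0∞)) ≤ (b : ℝ≥0∞) := iSup_le hble
      _ < (m : ℝ≥0∞) := ENNReal.coe_lt_coe.2 hbm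
      _ = (‖x j₀‖₊ : ℝ≥0∞) := by rw [hj₀m]
  · exact iSup_le fun i => ENNReal.coe_le_coe.2 (hj₀m ▸ hglobal i.1)

lemma summable_iff_tsum_ne_top {α : ℝ} (hα : 0 < α) (x : ℤ → V) :
    Summable (fun j : ℤ => ‖x j‖ ^ α) ↔ (∑' j : ℤ, (‖x j‖₊ : ℝ≥0∞) ^ α) ≠ ⊤ := by
  have h1 : (fun j : ℤ => ‖x j‖ ^ α) = fun j : ℤ => ((‖x j‖₊ ^ α : ℝ≥0) : ℝ) := by
    funext j
    rw [NNReal.coe_rpow, coe_nnnorm]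
  have h2 : ∀ j : ℤ, (‖x j‖₊ : ℝ≥0∞) ^ α = ((‖x j‖₊ ^ α : ℝ≥0) : ℝ≥0∞) := fun j =>
    (ENNReal.coe_rpow_of_nonneg _ hα.le).symm
  rw [h1, NNReal.summable_coe, ← ENNReal.tsum_coe_ne_top_iff_summable]
  rw [tsum_congr h2]

lemma tendsto_of_summable_rpow {α : ℝ} (hα : 0 < α) {x : ℤ → V}
    (hs : Summable fun j : ℤ => ‖x j‖ ^ α) :
    Tendsto (fun j : ℤ => ‖x j‖) cofinite (𝓝 0) := by
  have h1 : Tendsto (fun j : ℤ => ‖x j‖ ^ α) cofinite (𝓝 0) := hs.tendsto_cofinite_zero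
  have h2 : Tendsto (fun t : ℝ => t ^ α⁻¹) (𝓝 0) (𝓝 0) := by
    have hcont := Real.continuousAt_rpow_const 0 α⁻¹ (Or.inr (by positivity))
    have h00 : (0 : ℝ) ^ α⁻¹ = 0 := Real.zero_rpow (by positivity)
    simpa [ContinuousAt, h00] using hcont
  have h3 := h2.comp h1
  have h4 : (fun j : ℤ => (‖x j‖ ^ α) ^ α⁻¹) = fun j : ℤ => ‖x j‖ := by
    funext j
    rw [← Real.rpow_mul (norm_nonneg _), mul_inv_cancel₀ hα.ne', Real.rpow_one]
  have h5 : ((fun t : ℝ => t ^ α⁻¹) ∘ fun j : ℤ => ‖x j‖ ^ α) = fun j : ℤ => ‖x j‖ := by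
    funext j
    simp only [Function.comp_apply]
    rw [← Real.rpow_mul (norm_nonneg _), mul_inv_cancel₀ hα.ne', Real.rpow_one]
  rwa [h5] at h3

lemma tsum_shift_int (f : ℤ → ℝ≥0∞) (n : ℤ) : ∑' k : ℤ, f (k - n) = ∑' k : ℤ, f k :=
  (Equiv.subRight n).tsum_eq f

lemma tsum_neg_int (f : ℤ → ℝ≥0∞) : ∑' k : ℤ, f (-k) = ∑' k : ℤ, f k :=
  (Equiv.neg ℤ).tsum_eq f

lemma sbad_smul [NormedSpace ℝ V] {α : ℝ} (hα : 0 < α) {c : ℝ} (hc : 0 < c) (x : ℤ → V) :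
    ((∑' k : ℤ, (‖(c • x) k‖₊ : ℝ≥0∞) ^ α = ⊤) ↔ (∑' k : ℤ, (‖x k‖₊ : ℝ≥0∞) ^ α = ⊤)) := by
  have hk : ∀ k, (‖(c • x) k‖₊ : ℝ≥0∞) ^ α = (‖c‖₊ : ℝ≥0∞) ^ α * (‖x k‖₊ : ℝ≥0∞) ^ α := by
    intro k
    rw [Pi.smul_apply, nnnorm_smul, ENNReal.coe_mul, ENNReal.mul_rpow_of_nonneg _ _ hα.le]
  have ha0 : (‖c‖₊ : ℝ≥0∞) ^ α ≠ 0 := by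
    refine (ENNReal.rpow_pos ?_ ENNReal.coe_ne_top).ne'
    simp [hc.ne']
  have hat : (‖c‖₊ : ℝ≥0∞) ^ α ≠ ⊤ := ENNReal.rpow_ne_top_of_nonneg hα.le ENNReal.coe_ne_top
  simp only [hk]
  rw [ENNReal.tsum_mul_left, ENNReal.mul_eq_top]
  constructor
  · rintro (⟨-, h⟩ | ⟨h, -⟩)
    · exact h
    · exact absurd h hat
  · intro h
    exact Or.inl ⟨ha0, h⟩

lemma sbad_backshift {α : ℝ} (n : ℤ) (x : ℤ → V) :
    (∑' k : ℤ, (‖backshift n x k‖₊ : ℝ≥0∞) ^ α) = ∑' k : ℤ, (‖x k‖₊ : ℝ≥0∞) ^ α :=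
  tsum_shift_int (fun k => (‖x k‖₊ : ℝ≥0∞) ^ α) n

lemma pareto_lintegral {α : ℝ} (hα : 0 < α) {t : ℝ} (ht : 0 ≤ t) :
    (∫⁻ r in Ioi (0 : ℝ),
        (if 1 < r * t then (1 : ℝ≥0∞) else 0) * ENNReal.ofReal (α * r ^ (-α - 1)))
      = ENNReal.ofReal t ^ α := by
  rcases eq_or_lt_of_le ht with h0 | h0
  · rw [← h0]
    have hz : ∀ r : ℝ, (if 1 < r * (0 : ℝ) then (1 : ℝ≥0∞) else 0)
        * ENNReal.ofReal (α * r ^ (-α - 1)) = 0 := by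
      intro r
      rw [mul_zero, if_neg (by norm_num), zero_mul]
    simp only [hz, lintegral_zero, ENNReal.ofReal_zero, ENNReal.zero_rpow_of_pos hα]
  · set u := t⁻¹ with hu
    have hu0 : 0 < u := inv_pos.2 h0
    have hcong : ∀ r ∈ Ioi (0 : ℝ),
        (if 1 < r * t then (1 : ℝ≥0∞) else 0) * ENNReal.ofReal (α * r ^ (-α - 1))
          = (Ioi u).indicator (fun r => ENNReal.ofReal (α * r ^ (-α - 1))) r := by
      intro r _
      have hiff : 1 < r * t ↔ r ∈ Ioi u := by
        rw [mem_Ioi, hu, ← one_div, div_lt_iff₀ h0]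
      by_cases hr : r ∈ Ioi u
      · rw [if_pos (hiff.2 hr), one_mul, Set.indicator_of_mem hr]
      · rw [if_neg (fun hh => hr (hiff.1 hh)), zero_mul, Set.indicator_of_notMem hr]
    rw [setLIntegral_congr_fun_ae measurableSet_Ioi (ae_of_all _ hcong)]
    rw [lintegral_indicator measurableSet_Ioi, Measure.restrict_restrict measurableSet_Ioi,
      inter_eq_left.2 (Ioi_subset_Ioi hu0.le)]
    have hint : IntegrableOn (fun r : ℝ => α * r ^ (-α - 1)) (Ioi u) := by
      exact (integrableOn_Ioi_rpow_of_lt (by linarith) hu0).const_mul α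
    have hnn : 0 ≤ᵐ[volume.restrict (Ioi u)] fun r : ℝ => α * r ^ (-α - 1) := by
      refine (ae_restrict_iff' measurableSet_Ioi).2 (ae_of_all _ fun r hr => ?_)
      have hr0 : 0 < r := hu0.trans hr
      positivity
    rw [← ofReal_integral_eq_lintegral_ofReal hint hnn]
    rw [integral_const_mul, integral_Ioi_rpow_of_lt (by linarith) hu0]
    have h1 : -α - 1 + 1 = -α := by ring
    rw [h1]
    have h2 : α * (-u ^ (-α) / (-α)) = u ^ (-α) := by
      field_simp
    rw [h2, hu, Real.inv_rpow ht, Real.rpow_neg ht, inv_inv,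
      ENNReal.ofReal_rpow_of_pos h0]

end Aux

section Key

variable {V : Type*} [NormedAddCommGroup V] [NormedSpace ℝ V]
  [MeasurableSpace V] [BorelSpace V] [SecondCountableTopology V]

lemma map_backshift_int (ν : Measure (ℤ → V)) (h1 : ν.map (backshift 1) = ν) (k : ℤ) :
    ν.map (backshift k) = ν := by
  have hid : ∀ a b : ℤ, a + b = 0 →
      (backshift a : (ℤ → V) → ℤ → V) ∘ backshift b = id := by
    intro a b hab
    funext x
    show backshift a (backshift b x) = x
    rw [backshift_comp, hab]
    exact congrFun backshift_zero x
  have hneg : ν.map (backshift (-1)) = ν := by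
    conv_lhs => rw [← h1]
    rw [Measure.map_map (measurable_backshift (-1)) (measurable_backshift 1),
      hid (-1) 1 (by norm_num), Measure.map_id]
  induction k using Int.induction_on with
  | zero => rw [backshift_zero, Measure.map_id]
  | succ k ih =>
      have hc : (backshift ((k : ℤ) + 1) : (ℤ → V) → ℤ → V)
          = backshift 1 ∘ backshift (k : ℤ) := by
        funext x
        show backshift ((k : ℤ) + 1) x = backshift 1 (backshift (k : ℤ) x)
        rw [backshift_comp, add_comm]
      rw [hc, ← Measure.map_map (measurable_backshift 1) (measurable_backshift (k : ℤ)),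
        ih, h1]
  | pred k ih =>
      have hc : (backshift (-(k : ℤ) - 1) : (ℤ → V) → ℤ → V)
          = backshift (-1) ∘ backshift (-(k : ℤ)) := by
        funext x
        show backshift (-(k : ℤ) - 1) x = backshift (-1) (backshift (-(k : ℤ)) x)
        rw [backshift_comp]
        have he : (-1 : ℤ) + -(k : ℤ) = -(k : ℤ) - 1 := by omega
        rw [he]
      rw [hc, ← Measure.map_map (measurable_backshift (-1)) (measurable_backshift (-(k : ℤ))),
        ih, hneg]

lemma key_identity
    (α : ℝ) (hα : 0 < α)
    (ν : Measure (ℤ → V))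
    (hνshift : ν.map (backshift 1) = ν)
    {Ω : Type*} [MeasurableSpace Ω] (P : Measure Ω) [IsProbabilityMeasure P]
    (Y : Ω → ℤ → V) (hYmeas : Measurable Y)
    (hYlaw : P.map Y = ν.restrict {y : ℤ → V | 1 < ‖y 0‖})
    (Θ : Ω → ℤ → V) (hΘdef : ∀ ω, Θ ω = ‖Y ω 0‖⁻¹ • Y ω) (hΘmeas : Measurable Θ)
    (hY1 : P {ω | 1 < ‖Y ω 0‖} = 1)
    (hpolar : ∀ H : (ℤ → V) → ℝ≥0∞, Measurable H →
      ∫⁻ y in {y : ℤ → V | y 0 ≠ 0}, H y ∂ν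
        = ∫⁻ r in Ioi (0 : ℝ),
            (∫⁻ ω, H (r • Θ ω) ∂P) * ENNReal.ofReal (α * r ^ (-α - 1)))
    (S : Set (ℤ → V)) (hSmeas : MeasurableSet S)
    (hSsmul : ∀ c : ℝ, 0 < c → ∀ x, c • x ∈ S ↔ x ∈ S)
    (hSshift : ∀ (k : ℤ) (x : ℤ → V), backshift k x ∈ S ↔ x ∈ S)
    (j : ℤ) :
    P {ω | InfargmaxAt (Θ ω) j ∧ Θ ω ∈ S}
      = ∫⁻ ω in {ω | InfargmaxAt (Θ ω) 0 ∧ Θ ω ∈ S}, ((‖Θ ω (-j)‖₊ : ℝ≥0∞)) ^ α ∂P := by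
  set A : Set (ℤ → V) := {x | InfargmaxAt x j ∧ x ∈ S} with hA
  have hAmeas : MeasurableSet A := (measurableSet_infarg j).inter hSmeas
  have hAinv : ∀ c : ℝ, 0 < c → ∀ x, c • x ∈ A ↔ x ∈ A := fun c hc x =>
    and_congr (infarg_smul hc x j) (hSsmul c hc x)
  set B : Set (ℤ → V) := {y | 1 < ‖y 0‖} with hB
  have hBmeas : MeasurableSet B :=
    measurableSet_lt measurable_const ((measurable_pi_apply 0).norm)
  have hBΩ : MeasurableSet {ω | 1 < ‖Y ω 0‖} := hYmeas hBmeas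
  -- Step 1
  have hstep1 : P {ω | Θ ω ∈ A} = ν (A ∩ B) := by
    have hcompl : P ({ω | 1 < ‖Y ω 0‖}ᶜ) = 0 := by
      rw [prob_compl_eq_zero_iff hBΩ]
      exact hY1
    have hsub : P ({ω | Θ ω ∈ A} \ {ω | 1 < ‖Y ω 0‖}) = 0 :=
      measure_mono_null (diff_subset_compl _ _) hcompl
    have heq : {ω | Θ ω ∈ A} ∩ {ω | 1 < ‖Y ω 0‖} = Y ⁻¹' (A ∩ B) := by
      ext ω
      simp only [mem_inter_iff, mem_setOf_eq, mem_preimage]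
      constructor
      · rintro ⟨hΘA, hY0⟩
        have hc : (0 : ℝ) < ‖Y ω 0‖⁻¹ := by
          have : (0 : ℝ) < ‖Y ω 0‖ := lt_trans one_pos hY0
          positivity
        rw [hΘdef ω] at hΘA
        exact ⟨(hAinv _ hc _).1 hΘA, hY0⟩
      · rintro ⟨hYA, hY0⟩
        have hc : (0 : ℝ) < ‖Y ω 0‖⁻¹ := by
          have : (0 : ℝ) < ‖Y ω 0‖ := lt_trans one_pos hY0
          positivity
        refine ⟨?_, hY0⟩
        rw [hΘdef ω]
        exact (hAinv _ hc _).2 hYA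
    calc P {ω | Θ ω ∈ A}
        = P ({ω | Θ ω ∈ A} ∩ {ω | 1 < ‖Y ω 0‖})
            + P ({ω | Θ ω ∈ A} \ {ω | 1 < ‖Y ω 0‖}) :=
          (measure_inter_add_diff _ hBΩ).symm
      _ = P (Y ⁻¹' (A ∩ B)) := by rw [heq, hsub, add_zero]
      _ = (P.map Y) (A ∩ B) := (Measure.map_apply hYmeas (hAmeas.inter hBmeas)).symm
      _ = ν (A ∩ B) := by
          rw [hYlaw, Measure.restrict_apply (hAmeas.inter hBmeas), inter_assoc, inter_self]
  -- Step 2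
  set C : Set (ℤ → V) := {x | InfargmaxAt x 0 ∧ x ∈ S ∧ 1 < ‖x (-j)‖} with hC
  have hCmeas : MeasurableSet C :=
    (measurableSet_infarg 0).inter
      (hSmeas.inter (measurableSet_lt measurable_const ((measurable_pi_apply (-j)).norm)))
  have hstep2 : ν (A ∩ B) = ν C := by
    conv_lhs => rw [← map_backshift_int ν hνshift j]
    rw [Measure.map_apply (measurable_backshift j) (hAmeas.inter hBmeas)]
    congr 1
    ext x
    simp only [mem_preimage, mem_inter_iff, hA, hB, hC, mem_setOf_eq]
    rw [infarg_backshift, sub_self, hSshift j x]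
    have hx0 : backshift j x 0 = x (-j) := by
      show x (0 - j) = x (-j)
      congr 1
      omega
    rw [hx0, and_assoc]
  -- Step 3: polar decomposition
  have hCsub : C ⊆ {y : ℤ → V | y 0 ≠ 0} := fun x hx => infarg_pos hx.1
  have hpolC := hpolar (C.indicator fun _ => 1) (measurable_const.indicator hCmeas)
  have hLHSpol : (∫⁻ y in {y : ℤ → V | y 0 ≠ 0}, C.indicator (fun _ => 1) y ∂ν) = ν C := by
    rw [lintegral_indicator hCmeas, setLIntegral_one, Measure.restrict_apply hCmeas,
      inter_eq_left.2 hCsub]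
  -- the set D
  set D : Set Ω := {ω | InfargmaxAt (Θ ω) 0 ∧ Θ ω ∈ S} with hD
  have hDmeas : MeasurableSet D := hΘmeas ((measurableSet_infarg 0).inter hSmeas)
  set g : ℝ → Ω → ℝ≥0∞ := fun r ω =>
    D.indicator (fun _ => 1) ω *
      ((if 1 < r * ‖Θ ω (-j)‖ then (1 : ℝ≥0∞) else 0) * ENNReal.ofReal (α * r ^ (-α - 1)))
    with hg
  have hcongr : ∀ r ∈ Ioi (0 : ℝ),
      (∫⁻ ω, C.indicator (fun _ => 1) (r • Θ ω) ∂P) * ENNReal.ofReal (α * r ^ (-α - 1))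
        = ∫⁻ ω, g r ω ∂P := by
    intro r hr
    rw [mem_Ioi] at hr
    have hpt : ∀ ω, C.indicator (fun _ => (1 : ℝ≥0∞)) (r • Θ ω)
        = D.indicator (fun _ => 1) ω * (if 1 < r * ‖Θ ω (-j)‖ then (1 : ℝ≥0∞) else 0) := by
      intro ω
      have hnorm : ‖(r • Θ ω) (-j)‖ = r * ‖Θ ω (-j)‖ := by
        rw [Pi.smul_apply, norm_smul, Real.norm_of_nonneg hr.le]
      by_cases hω : r • Θ ω ∈ C
      · have h1 := hω.1
        have h2 := hω.2.1
        have h3 := hω.2.2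
        have hDω : ω ∈ D := ⟨(infarg_smul hr _ 0).1 h1, (hSsmul r hr _).1 h2⟩
        have hlt : 1 < r * ‖Θ ω (-j)‖ := by rwa [hnorm] at h3
        rw [indicator_of_mem hω (fun _ => (1 : ℝ≥0∞)), indicator_of_mem hDω,
          if_pos hlt, one_mul]
      · rw [indicator_of_notMem hω]
        by_cases hDω : ω ∈ D
        · have hnot : ¬ (1 < r * ‖Θ ω (-j)‖) := fun hlt => hω
            ⟨(infarg_smul hr _ 0).2 hDω.1, (hSsmul r hr _).2 hDω.2, by rwa [hnorm]⟩
          rw [indicator_of_mem hDω, if_neg hnot, mul_zero]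
        · rw [indicator_of_notMem hDω, zero_mul]
    calc (∫⁻ ω, C.indicator (fun _ => 1) (r • Θ ω) ∂P) * ENNReal.ofReal (α * r ^ (-α - 1))
        = (∫⁻ ω, D.indicator (fun _ => 1) ω
            * (if 1 < r * ‖Θ ω (-j)‖ then (1 : ℝ≥0∞) else 0) ∂P)
              * ENNReal.ofReal (α * r ^ (-α - 1)) := by
          rw [lintegral_congr hpt]
      _ = ∫⁻ ω, (D.indicator (fun _ => 1) ω
            * (if 1 < r * ‖Θ ω (-j)‖ then (1 : ℝ≥0∞) else 0))
              * ENNReal.ofReal (α * r ^ (-α - 1)) ∂P :=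
          (lintegral_mul_const' _ _ ENNReal.ofReal_ne_top).symm
      _ = ∫⁻ ω, g r ω ∂P := lintegral_congr fun ω => by rw [hg, mul_assoc]
  have hswapmeas : Measurable (Function.uncurry g) := by
    show Measurable fun p : ℝ × Ω => D.indicator (fun _ => (1 : ℝ≥0∞)) p.2 *
      ((if 1 < p.1 * ‖Θ p.2 (-j)‖ then (1 : ℝ≥0∞) else 0)
        * ENNReal.ofReal (α * p.1 ^ (-α - 1)))
    refine Measurable.mul ?_ (Measurable.mul ?_ ?_)
    · exact (measurable_const.indicator hDmeas).comp measurable_snd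
    · have hset : MeasurableSet {p : ℝ × Ω | 1 < p.1 * ‖Θ p.2 (-j)‖} :=
        measurableSet_lt measurable_const
          (measurable_fst.mul ((measurable_pi_apply (-j)).comp
            (hΘmeas.comp measurable_snd)).norm)
      exact Measurable.ite hset measurable_const measurable_const
    · exact (measurable_const.mul (measurable_fst.pow_const (-α - 1))).ennreal_ofReal
  have hswap : (∫⁻ r in Ioi (0 : ℝ), ∫⁻ ω, g r ω ∂P)
      = ∫⁻ ω, (∫⁻ r in Ioi (0 : ℝ), g r ω) ∂P :=
    lintegral_lintegral_swap hswapmeas.aemeasurable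
  have hinner : ∀ ω, (∫⁻ r in Ioi (0 : ℝ), g r ω)
      = D.indicator (fun ω' => ((‖Θ ω' (-j)‖₊ : ℝ≥0∞)) ^ α) ω := by
    intro ω
    have hne : D.indicator (fun _ => (1 : ℝ≥0∞)) ω ≠ ⊤ := by
      by_cases hDω : ω ∈ D <;> simp [hDω]
    rw [hg]
    rw [lintegral_const_mul' _ _ hne, pareto_lintegral hα (norm_nonneg (Θ ω (-j)))]
    rw [ofReal_norm, enorm_eq_nnnorm]
    by_cases hDω : ω ∈ D <;> simp [hDω]
  calc P {ω | InfargmaxAt (Θ ω) j ∧ Θ ω ∈ S}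
      = ν (A ∩ B) := hstep1
    _ = ν C := hstep2
    _ = ∫⁻ r in Ioi (0 : ℝ),
          (∫⁻ ω, C.indicator (fun _ => 1) (r • Θ ω) ∂P)
            * ENNReal.ofReal (α * r ^ (-α - 1)) := by rw [← hpolC, hLHSpol]
    _ = ∫⁻ r in Ioi (0 : ℝ), ∫⁻ ω, g r ω ∂P :=
        setLIntegral_congr_fun_ae measurableSet_Ioi (ae_of_all _ hcongr)
    _ = ∫⁻ ω, (∫⁻ r in Ioi (0 : ℝ), g r ω) ∂P := hswap
    _ = ∫⁻ ω, D.indicator (fun ω' => ((‖Θ ω' (-j)‖₊ : ℝ≥0∞)) ^ α) ω ∂P :=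
        lintegral_congr hinner
    _ = ∫⁻ ω in D, ((‖Θ ω (-j)‖₊ : ℝ≥0∞)) ^ α ∂P := lintegral_indicator hDmeas _

end Key

set_option maxHeartbeats 1000000 in
/-- **Equivalent formulations of the tail process vanishing at infinity.**
The following are equivalent: (i) `P(I(Θ) ∈ ℤ) = 1`;
(ii) `P(lim_{|j|→∞} ‖Θ_j‖ = 0) = 1`; (iii) `P(Σ_{j∈ℤ} ‖Θ_j‖^α < ∞) = 1`. -/
theorem statement6
    -- `V` plays the role of `ℝ^d` (`d ≥ 1`) equipped with an arbitrary norm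
    {V : Type*} [NormedAddCommGroup V] [NormedSpace ℝ V] [FiniteDimensional ℝ V]
    [Nontrivial V] [MeasurableSpace V] [BorelSpace V]
    (α : ℝ) (hα : 0 < α)
    -- the tail measure and its properties
    (ν : Measure (ℤ → V))
    (hν0 : ν {0} = 0)
    (hν1 : ν {y : ℤ → V | 1 < ‖y 0‖} = 1)
    (hνshift : ν.map (backshift 1) = ν)
    (hνhom : ∀ A : Set (ℤ → V), MeasurableSet A → ∀ c : ℝ, 0 < c →
      ν ((fun x => c • x) '' A) = ENNReal.ofReal (c ^ (-α)) * ν A)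
    -- the tail process `Y` and the spectral tail process `Θ`
    {Ω : Type*} [MeasurableSpace Ω] (P : Measure Ω) [IsProbabilityMeasure P]
    (Y : Ω → ℤ → V) (hYmeas : Measurable Y)
    (hYlaw : P.map Y = ν.restrict {y : ℤ → V | 1 < ‖y 0‖})
    (Θ : Ω → ℤ → V) (hΘdef : ∀ ω, Θ ω = ‖Y ω 0‖⁻¹ • Y ω)
    (hPareto : ∀ u : ℝ, 1 ≤ u → P {ω | u < ‖Y ω 0‖} = ENNReal.ofReal (u ^ (-α)))
    (hindep : IndepFun (fun ω => ‖Y ω 0‖) Θ P)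
    (hpolar : ∀ H : (ℤ → V) → ℝ≥0∞, Measurable H →
      ∫⁻ y in {y : ℤ → V | y 0 ≠ 0}, H y ∂ν
        = ∫⁻ r in Ioi (0 : ℝ),
            (∫⁻ ω, H (r • Θ ω) ∂P) * ENNReal.ofReal (α * r ^ (-α - 1)))
    :
    (P {ω | ∃ j : ℤ, InfargmaxAt (Θ ω) j} = 1 ↔
        P {ω | Tendsto (fun j : ℤ => ‖Θ ω j‖) cofinite (𝓝 0)} = 1) ∧
      (P {ω | Tendsto (fun j : ℤ => ‖Θ ω j‖) cofinite (𝓝 0)} = 1 ↔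
        P {ω | Summable fun j : ℤ => ‖Θ ω j‖ ^ α} = 1) := by
    -- measurability of Θ
  have hΘmeas : Measurable Θ := by
    have hfun : Θ = fun ω => ‖Y ω 0‖⁻¹ • Y ω := funext hΘdef
    rw [hfun]
    have h0 : Measurable fun ω => ‖Y ω 0‖⁻¹ := ((measurable_pi_apply 0).comp hYmeas).norm.inv
    exact measurable_pi_lambda _ fun j => h0.smul ((measurable_pi_apply j).comp hYmeas)
  have hY1 : P {ω | 1 < ‖Y ω 0‖} = 1 := by
    have h := hPareto 1 le_rfl
    simpa [Real.one_rpow] using h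
  have hBΩ : MeasurableSet {ω | 1 < ‖Y ω 0‖} :=
    hYmeas (measurableSet_lt measurable_const ((measurable_pi_apply 0).norm))
  have hsubΘ0 : {ω | 1 < ‖Y ω 0‖} ⊆ {ω | Θ ω 0 ≠ 0} := by
    intro ω hω
    rw [mem_setOf_eq] at hω
    rw [mem_setOf_eq, hΘdef ω]
    have hY0 : Y ω 0 ≠ 0 := by
      intro h
      rw [h, norm_zero] at hω
      linarith
    show ‖Y ω 0‖⁻¹ • Y ω 0 ≠ 0
    exact smul_ne_zero (inv_ne_zero (ne_of_gt (lt_trans one_pos hω))) hY0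
  -- the three events
  set Ei : Set Ω := {ω | ∃ j : ℤ, InfargmaxAt (Θ ω) j} with hEi
  set Et : Set Ω := {ω | Tendsto (fun j : ℤ => ‖Θ ω j‖) cofinite (𝓝 0)} with hEt
  set Es : Set Ω := {ω | Summable fun j : ℤ => ‖Θ ω j‖ ^ α} with hEs
  have hmeasj : ∀ j : ℤ, MeasurableSet {ω | InfargmaxAt (Θ ω) j} :=
    fun j => hΘmeas (measurableSet_infarg j)
  have hEimeas : MeasurableSet Ei := by
    have : Ei = ⋃ j : ℤ, {ω | InfargmaxAt (Θ ω) j} := by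
      ext ω
      simp [hEi, mem_iUnion]
    rw [this]
    exact MeasurableSet.iUnion hmeasj
  -- the ENNReal-valued sum
  set T : Ω → ℝ≥0∞ := fun ω => ∑' k : ℤ, ((‖Θ ω k‖₊ : ℝ≥0∞)) ^ α with hT
  have hTmeas : Measurable T := by
    apply Measurable.ennreal_tsum
    intro k
    have : Measurable fun ω => ((‖Θ ω k‖₊ : ℝ≥0∞)) :=
      measurable_coe_nnreal_ennreal.comp ((measurable_pi_apply k).comp hΘmeas).nnnorm
    fun_prop
  have hNmeas : MeasurableSet {ω | T ω = ⊤} := hTmeas (measurableSet_singleton ⊤)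
  have hEsN : Es = {ω | T ω = ⊤}ᶜ := by
    ext ω
    simp only [hEs, mem_setOf_eq, mem_compl_iff, hT]
    rw [summable_iff_tsum_ne_top hα (Θ ω)]
  -- implication (iii) → (ii)
  have imp1 : P Es = 1 → P Et = 1 := by
    intro h
    have hsub : Es ⊆ Et := fun ω hω => tendsto_of_summable_rpow hα hω
    exact le_antisymm prob_le_one (le_trans (le_of_eq h.symm) (measure_mono hsub))
  -- implication (ii) → (i)
  have imp2 : P Et = 1 → P Ei = 1 := by
    intro h
    have hsub : Et ∩ {ω | 1 < ‖Y ω 0‖} ⊆ Ei := by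
      intro ω hω
      exact exists_infarg_of_tendsto (hsubΘ0 hω.2) hω.1
    have hcompl : P ({ω | 1 < ‖Y ω 0‖}ᶜ) = 0 := by
      rw [prob_compl_eq_zero_iff hBΩ]
      exact hY1
    have hdiff : P (Et \ {ω | 1 < ‖Y ω 0‖}) = 0 :=
      measure_mono_null (diff_subset_compl _ _) hcompl
    have h2 : P (Et ∩ {ω | 1 < ‖Y ω 0‖}) = 1 := by
      have := measure_inter_add_diff Et hBΩ (μ := P)
      rw [hdiff, add_zero] at this
      rw [this, h]
    exact le_antisymm prob_le_one (le_trans (le_of_eq h2.symm) (measure_mono hsub))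
  -- implication (i) → (iii): the time change identity
  have imp3 : P Ei = 1 → P Es = 1 := by
    intro hI
    have hkey := fun (S : Set (ℤ → V)) hm hs1 hs2 j =>
      key_identity α hα ν hνshift P Y hYmeas hYlaw Θ hΘdef hΘmeas hY1 hpolar S hm hs1 hs2 j
    -- sum over j of the left sides, with S (generic)
    have hsumLHS : ∀ S : Set (ℤ → V), MeasurableSet S →
        (∑' j : ℤ, P {ω | InfargmaxAt (Θ ω) j ∧ Θ ω ∈ S})
          = P {ω | (∃ j : ℤ, InfargmaxAt (Θ ω) j) ∧ Θ ω ∈ S} := by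
      intro S hm
      have hdisj : Pairwise (Function.onFun Disjoint fun j : ℤ => {ω | InfargmaxAt (Θ ω) j ∧ Θ ω ∈ S}) := by
        intro j j' hne
        rw [Function.onFun]
        exact Set.disjoint_left.2 fun ω hj hj' => hne (infarg_unique hj.1 hj'.1)
      have hms : ∀ j : ℤ, MeasurableSet {ω | InfargmaxAt (Θ ω) j ∧ Θ ω ∈ S} :=
        fun j => hΘmeas ((measurableSet_infarg j).inter hm)
      rw [← measure_iUnion hdisj hms]
      congr 1
      ext ω
      simp [mem_iUnion, exists_and_right]
    -- case S = univ
    have huniv : ∀ j : ℤ,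
        P {ω | InfargmaxAt (Θ ω) j ∧ Θ ω ∈ (univ : Set (ℤ → V))}
          = ∫⁻ ω in {ω | InfargmaxAt (Θ ω) 0 ∧ Θ ω ∈ (univ : Set (ℤ → V))},
              ((‖Θ ω (-j)‖₊ : ℝ≥0∞)) ^ α ∂P :=
      hkey univ MeasurableSet.univ (fun _ _ _ => Iff.rfl) (fun _ _ => Iff.rfl)
    have hsumRHS : ∀ D : Set Ω, MeasurableSet D →
        (∑' j : ℤ, ∫⁻ ω in D, ((‖Θ ω (-j)‖₊ : ℝ≥0∞)) ^ α ∂P) = ∫⁻ ω in D, T ω ∂P := by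
      intro D hD
      rw [← lintegral_tsum]
      · apply lintegral_congr
        intro ω
        exact tsum_neg_int fun k => ((‖Θ ω k‖₊ : ℝ≥0∞)) ^ α
      · intro j
        have : Measurable fun ω => ((‖Θ ω (-j)‖₊ : ℝ≥0∞)) :=
          measurable_coe_nnreal_ennreal.comp ((measurable_pi_apply (-j)).comp hΘmeas).nnnorm
        exact (by fun_prop : Measurable fun ω => ((‖Θ ω (-j)‖₊ : ℝ≥0∞)) ^ α).aemeasurable
    set D₀ : Set Ω := {ω | InfargmaxAt (Θ ω) 0 ∧ Θ ω ∈ (univ : Set (ℤ → V))} with hD₀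
    have hD₀meas : MeasurableSet D₀ := hΘmeas ((measurableSet_infarg 0).inter MeasurableSet.univ)
    have hfin : ∫⁻ ω in D₀, T ω ∂P = 1 := by
      rw [← hsumRHS D₀ hD₀meas]
      rw [tsum_congr fun j => (huniv j).symm, hsumLHS univ MeasurableSet.univ]
      have : {ω | (∃ j : ℤ, InfargmaxAt (Θ ω) j) ∧ Θ ω ∈ (univ : Set (ℤ → V))} = Ei := by
        ext ω
        simp [hEi]
      rw [this, hI]
    -- T < ∞ a.e. on D₀
    have hae : ∀ᵐ ω ∂(P.restrict D₀), T ω < ⊤ :=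
      ae_lt_top hTmeas (by rw [hfin]; exact ENNReal.one_ne_top)
    have hnull : P ({ω | T ω = ⊤} ∩ D₀) = 0 := by
      rw [← Measure.restrict_apply hNmeas]
      rw [ae_iff] at hae
      have hset : {ω | ¬ T ω < ⊤} = {ω | T ω = ⊤} := by
        ext ω
        simp [not_lt, top_le_iff]
      rwa [hset] at hae
    -- case S = Sbad
    set Sbad : Set (ℤ → V) := {x : ℤ → V | (∑' k : ℤ, ((‖x k‖₊ : ℝ≥0∞)) ^ α) = ⊤} with hSbad
    have hSbadmeas : MeasurableSet Sbad := by
      have hms : Measurable fun x : ℤ → V => ∑' k : ℤ, ((‖x k‖₊ : ℝ≥0∞)) ^ α := by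
        apply Measurable.ennreal_tsum
        intro k
        have : Measurable fun x : ℤ → V => ((‖x k‖₊ : ℝ≥0∞)) :=
          measurable_coe_nnreal_ennreal.comp (measurable_pi_apply k).nnnorm
        fun_prop
      exact hms (measurableSet_singleton ⊤)
    have hSbadsmul : ∀ c : ℝ, 0 < c → ∀ x : ℤ → V, c • x ∈ Sbad ↔ x ∈ Sbad :=
      fun c hc x => sbad_smul hα hc x
    have hSbadshift : ∀ (k : ℤ) (x : ℤ → V), backshift k x ∈ Sbad ↔ x ∈ Sbad := by
      intro k x
      show (∑' i : ℤ, ((‖backshift k x i‖₊ : ℝ≥0∞)) ^ α) = ⊤ ↔ _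
      rw [sbad_backshift]
      exact Iff.rfl
    have hbad : ∀ j : ℤ, P {ω | InfargmaxAt (Θ ω) j ∧ Θ ω ∈ Sbad} = 0 := by
      intro j
      rw [hkey Sbad hSbadmeas hSbadsmul hSbadshift j]
      apply setLIntegral_measure_zero
      have hseteq : {ω | InfargmaxAt (Θ ω) 0 ∧ Θ ω ∈ Sbad} = {ω | T ω = ⊤} ∩ D₀ := by
        ext ω
        simp only [hSbad, hD₀, hT, mem_inter_iff, mem_setOf_eq, mem_univ, and_true]
        tauto
      rw [hseteq]
      exact hnull
    -- conclude P {T = ⊤} = 0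
    have hNnull : P {ω | T ω = ⊤} = 0 := by
      have hsplit := measure_inter_add_diff {ω | T ω = ⊤} hEimeas (μ := P)
      have hdiff : P ({ω | T ω = ⊤} \ Ei) = 0 := by
        apply measure_mono_null (diff_subset_compl _ _)
        rw [prob_compl_eq_zero_iff hEimeas]
        exact hI
      have hinter : P ({ω | T ω = ⊤} ∩ Ei) = 0 := by
        apply measure_mono_null (t := ⋃ j : ℤ, {ω | InfargmaxAt (Θ ω) j ∧ Θ ω ∈ Sbad})
        · intro ω hω
          obtain ⟨j, hj⟩ := hω.2
          exact mem_iUnion.2 ⟨j, hj, hω.1⟩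
        · exact measure_iUnion_null hbad
      rw [← hsplit, hinter, hdiff, add_zero]
    rw [hEsN, prob_compl_eq_one_sub hNmeas, hNnull, tsub_zero]
  exact ⟨⟨fun h => imp1 (imp3 h), imp2⟩, ⟨fun h => imp3 (imp2 h), imp1⟩⟩
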